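/- Let S be a 3-tensor on a vector space V given by S(x,y,z) = 2 b(x,y) ξ(z) − b(z,y) ξ(x) − b(z,x) ξ(y), where b is a symmetric bilinear form and ξ a 1-form. If S(x,y,z) = η(x,y) λ(z) for some symmetric bilinear form η and a nonzero 1-form λ, then η = 0 and S = 0. -/
import Mathlib

/-- Let `S(x,y,z) = 2 b(x,y) ξ(z) − b(z,y) ξ(x) − b(z,x) ξ(y)` with `b` a symmetric
bilinear form and `ξ` a 1-form.  If `S(x,y,z) = η(x,y) λ(z)` for some symmetric bilinear
form `η` and a nonzero 1-form `λ`, then `η = 0` and `S = 0`. -/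
theorem stmt_10 {V : Type*} [AddCommGroup V] [Module ℝ V] [FiniteDimensional ℝ V]
    (b : V →ₗ[ℝ] V →ₗ[ℝ] ℝ) (hbsym : ∀ x y, b x y = b y x)
    (ξ : V →ₗ[ℝ] ℝ)
    (η : V →ₗ[ℝ] V →ₗ[ℝ] ℝ) (hηsym : ∀ x y, η x y = η y x)
    (lam : V →ₗ[ℝ] ℝ) (hlam : lam ≠ 0)
    (hS : ∀ x y z,
      2 * b x y * ξ z - b z y * ξ x - b z x * ξ y = η x y * lam z) :
    η = 0 ∧ ∀ x y z, 2 * b x y * ξ z - b z y * ξ x - b z x * ξ y = 0 := by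
  have key : ∀ x y z, η x y * lam z + η y z * lam x + η z x * lam y = 0 := by
    intro x y z
    have h1 := hS x y z
    have h2 := hS y z x
    have h3 := hS z x y
    linear_combination -h1 - h2 - h3 - ξ z * hbsym y x - ξ x * hbsym z y - ξ y * hbsym x z
  obtain ⟨v, hv⟩ : ∃ v, lam v ≠ 0 := by
    by_contra h
    push_neg at h
    exact hlam (by ext w; simpa using h w)
  have hvv : η v v = 0 := by
    have := key v v v
    have h3 : (3 : ℝ) * (η v v * lam v) = 0 := by linarith
    rcases mul_eq_zero.mp h3 with h | h
    · norm_num at h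
    · exact (mul_eq_zero.mp h).resolve_right hv
  have hxv : ∀ x, η x v = 0 := by
    intro x
    have := key x v v
    rw [hvv, hηsym v x] at this
    have h2 : (2 : ℝ) * (η x v * lam v) = 0 := by linarith
    rcases mul_eq_zero.mp h2 with h | h
    · norm_num at h
    · exact (mul_eq_zero.mp h).resolve_right hv
  have hη : ∀ x y, η x y = 0 := by
    intro x y
    have := key x y v
    rw [hxv y, hηsym v x, hxv x] at this
    simp at this
    exact this.resolve_right hv
  constructor
  · ext x y; simpa using hη x y
  · intro x y z; rw [hS x y z, hη x y]; ring
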